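/- arXiv:1201.3699 — 2 statements merged into one kernel-verified Lean document; each statement's English description precedes it below -/
import Mathlib

section
/- Let g(n,3,ℓ) denote the minimum number of edges of a graph G of order n with λ_3(G) = ℓ. Then g(n,3,n−2) = C(n,2) − 1 for n ≥ 3. -/
set_option linter.unusedSectionVars false
set_option linter.unusedVariables false

open SimpleGraph

/-- An `S`-Steiner tree in `G`: a subgraph of `G` that is a tree whose
vertex set contains `S`. -/
def SimpleGraph.IsSteinerTree {V : Type*} (G : SimpleGraph V) (S : Set V)
    (T : G.Subgraph) : Prop :=
  S ⊆ T.verts ∧ T.coe.IsTree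

/-- The generalized local edge-connectivity `λ(S)`: the maximum number of
pairwise edge-disjoint `S`-Steiner trees in `G`. -/
noncomputable def SimpleGraph.steinerLambda {V : Type*} (G : SimpleGraph V)
    (S : Set V) : ℕ :=
  sSup {n | ∃ T : Fin n → G.Subgraph, (∀ i, G.IsSteinerTree S (T i)) ∧
    ∀ i j, i ≠ j → Disjoint (T i).edgeSet (T j).edgeSet}

/-- The generalized `k`-edge-connectivity `λ_k(G)`:
the minimum of `λ(S)` over all `k`-element vertex subsets `S`. -/
noncomputable def SimpleGraph.genEdgeConn {V : Type*} (G : SimpleGraph V)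
    (k : ℕ) : ℕ :=
  sInf {m | ∃ S : Set V, S.ncard = k ∧ G.steinerLambda S = m}


variable {W : Type*}

lemma closed_not_reachable {H : SimpleGraph W} {C : Set W}
    (hC : ∀ a ∈ C, ∀ b, H.Adj a b → b ∈ C) {u v : W} (hu : u ∈ C) (hv : v ∉ C) :
    ¬ H.Reachable u v := by
  rintro ⟨p⟩
  induction p with
  | nil => exact hv hu
  | cons h q ih => exact ih (hC _ hu _ h) hv

lemma adj_of_reachable_ne {H : SimpleGraph W} {u v : W} (h : H.Reachable u v) (hne : u ≠ v) :
    ∃ z, H.Adj u z := by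
  obtain ⟨p⟩ := h
  cases p with
  | nil => exact absurd rfl hne
  | cons h q => exact ⟨_, h⟩

lemma star_isTree (H : SimpleGraph W) (z : W)
    (h : ∀ a b : W, H.Adj a b ↔ ((a = z ∧ b ≠ z) ∨ (b = z ∧ a ≠ z))) : H.IsTree := by
  have hreach : ∀ v : W, H.Reachable v z := by
    intro v
    by_cases hv : v = z
    · subst hv; exact Reachable.refl v
    · exact Adj.reachable ((h v z).2 (Or.inr ⟨rfl, hv⟩))
  constructor
  · exact (connected_iff_exists_forall_reachable H).2 ⟨z, fun w => (hreach w).symm⟩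
  · rw [isAcyclic_iff_forall_adj_isBridge]
    have key : ∀ b : W, b ≠ z → H.IsBridge s(z, b) := by
      intro b hb
      rw [isBridge_iff]
      intro hr
      obtain ⟨q⟩ := hr.symm
      cases q with
      | nil => exact hb rfl
      | cons hadj q =>
        rename_i w
        obtain ⟨hH, hne⟩ := hadj
        rcases (h b w).1 hH with ⟨hbz, _⟩ | ⟨hwz, _⟩
        · exact hb hbz
        · subst hwz
          exact hne (by simp [Sym2.eq_swap, hb])
    intro a b hab
    rcases (h a b).1 hab with ⟨rfl, hb⟩ | ⟨rfl, ha⟩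
    · exact key b hb
    · rw [Sym2.eq_swap]; exact key a ha

variable {W : Type*}

lemma path4_isTree (H : SimpleGraph W) (a b c d : W)
    (hall : ∀ v : W, v = a ∨ v = b ∨ v = c ∨ v = d)
    (hab : a ≠ b) (hac : a ≠ c) (had : a ≠ d) (hbc : b ≠ c) (hbd : b ≠ d) (hcd : c ≠ d)
    (h : ∀ u v : W, H.Adj u v ↔ (s(u,v) = s(a,b) ∨ s(u,v) = s(b,c) ∨ s(u,v) = s(c,d))) :
    H.IsTree := by
  have hAB : H.Adj a b := (h a b).2 (Or.inl rfl)
  have hBC : H.Adj b c := (h b c).2 (Or.inr (Or.inl rfl))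
  have hCD : H.Adj c d := (h c d).2 (Or.inr (Or.inr rfl))
  have hreach : ∀ v : W, H.Reachable v b := by
    intro v
    rcases hall v with rfl | rfl | rfl | rfl
    · exact hAB.reachable
    · exact Reachable.refl _
    · exact hBC.reachable.symm
    · exact (hCD.reachable.symm).trans hBC.reachable.symm
  constructor
  · exact (connected_iff_exists_forall_reachable H).2 ⟨b, fun w => (hreach w).symm⟩
  · rw [isAcyclic_iff_forall_adj_isBridge]
    have del_adj : ∀ (e : Sym2 W) (u v : W),
        (H.deleteEdges {e}).Adj u v ↔ (H.Adj u v ∧ s(u, v) ≠ e) := by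
      intro e u v
      constructor
      · rintro ⟨h1, h2⟩
        exact ⟨h1, fun he => h2 (by simp [he, h1.ne])⟩
      · rintro ⟨h1, h2⟩
        exact ⟨h1, by simp [h2]⟩
    have brAB : H.IsBridge s(a, b) := by
      rw [isBridge_iff]
      refine closed_not_reachable (C := {a}) ?_ rfl (by simp [hab.symm])
      rintro w rfl z hadj
      rw [del_adj] at hadj
      obtain ⟨h1, h2⟩ := hadj
      rcases (h w z).1 h1 with h3 | h3 | h3
      · exact absurd h3 h2
      · rw [Sym2.eq_iff] at h3; tauto
      · rw [Sym2.eq_iff] at h3; tauto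
    have brCD : H.IsBridge s(c, d) := by
      rw [isBridge_iff]
      intro hr
      refine closed_not_reachable (C := {d}) ?_ rfl (by simp [hcd]) hr.symm
      rintro w rfl z hadj
      rw [del_adj] at hadj
      obtain ⟨h1, h2⟩ := hadj
      rcases (h w z).1 h1 with h3 | h3 | h3
      · rw [Sym2.eq_iff] at h3; tauto
      · rw [Sym2.eq_iff] at h3; tauto
      · rw [Sym2.eq_iff] at h3
        rcases h3 with ⟨h4,_⟩|⟨_,h4⟩
        · exact absurd (h4 ▸ rfl) hcd
        · exact absurd (by rw [h4]; exact Sym2.eq_swap) h2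
    have brBC : H.IsBridge s(b, c) := by
      rw [isBridge_iff]
      refine closed_not_reachable (C := {a, b}) ?_ (by simp) (by simp [hbc.symm, hac.symm])
      rintro w hw z hadj
      rw [del_adj] at hadj
      obtain ⟨h1, h2⟩ := hadj
      rcases hw with rfl | rfl
      · rcases (h w z).1 h1 with h3 | h3 | h3
        · rw [Sym2.eq_iff] at h3
          rcases h3 with ⟨_, rfl⟩ | ⟨h4, _⟩
          · exact Or.inr rfl
          · exact absurd h4 hab
        · rw [Sym2.eq_iff] at h3; tauto
        · rw [Sym2.eq_iff] at h3; tauto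
      · rcases (h w z).1 h1 with h3 | h3 | h3
        · rw [Sym2.eq_iff] at h3
          rcases h3 with ⟨h4, _⟩ | ⟨_, rfl⟩
          · exact absurd h4 hab.symm
          · exact Or.inl rfl
        · exact absurd h3 h2
        · rw [Sym2.eq_iff] at h3; tauto
    intro u v huv
    rcases (h u v).1 huv with h3 | h3 | h3 <;> rw [h3]
    · exact brAB
    · exact brBC
    · exact brCD

variable {V : Type*}

/-- Star subgraph: center `z`, leaves `L`. -/
def starSub (G : SimpleGraph V) (z : V) (L : Set V) : G.Subgraph where
  verts := insert z L
  Adj a b := ((a = z ∧ b ∈ L) ∨ (b = z ∧ a ∈ L)) ∧ G.Adj a b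
  adj_sub h := h.2
  edge_vert := by
    rintro a b ⟨⟨rfl, hb⟩ | ⟨rfl, ha⟩, _⟩
    · exact Set.mem_insert _ _
    · exact Set.mem_insert_iff.2 (Or.inr ha)
  symm := by
    constructor
    rintro a b ⟨h1, h2⟩
    exact ⟨h1.symm, h2.symm⟩

lemma starSub_verts (G : SimpleGraph V) (z : V) (L : Set V) :
    (starSub G z L).verts = insert z L := rfl

lemma starSub_edge {G : SimpleGraph V} {z : V} {L : Set V} {e : Sym2 V}
    (he : e ∈ (starSub G z L).edgeSet) : ∃ l ∈ L, e = s(z, l) := by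
  induction e with
  | _ a b =>
    rcases he with ⟨⟨rfl, hb⟩ | ⟨rfl, ha⟩, _⟩
    · exact ⟨b, hb, rfl⟩
    · exact ⟨a, ha, Sym2.eq_swap⟩

lemma starSub_isTree {G : SimpleGraph V} {z : V} {L : Set V}
    (h : ∀ l ∈ L, G.Adj z l) : (starSub G z L).coe.IsTree := by
  have hzL : z ∉ L := fun hz => (h z hz).ne rfl
  apply star_isTree _ (⟨z, Set.mem_insert _ _⟩ : ↥(starSub G z L).verts)
  intro u v
  have hu := u.2
  have hv := v.2
  constructor
  · rintro ⟨⟨h1, hb'⟩ | ⟨h1, ha'⟩, hG⟩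
    · refine Or.inl ⟨Subtype.ext h1, fun hbz => hzL ?_⟩
      have h2 : (v : V) = z := congrArg Subtype.val hbz
      exact h2 ▸ hb'
    · refine Or.inr ⟨Subtype.ext h1, fun haz => hzL ?_⟩
      have h2 : (u : V) = z := congrArg Subtype.val haz
      exact h2 ▸ ha'
  · rintro (⟨ha', hb'⟩ | ⟨hb', ha'⟩)
    · have cu : (u : V) = z := congrArg Subtype.val ha'
      have cv : (v : V) ≠ z := fun h2 => hb' (Subtype.ext h2)
      have hvL : (v : V) ∈ L := by
        rcases hv with h2 | h2
        · exact absurd h2 cv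
        · exact h2
      exact ⟨Or.inl ⟨cu, hvL⟩, by rw [cu]; exact h _ hvL⟩
    · have cv : (v : V) = z := congrArg Subtype.val hb'
      have cu : (u : V) ≠ z := fun h2 => ha' (Subtype.ext h2)
      have huL : (u : V) ∈ L := by
        rcases hu with h2 | h2
        · exact absurd h2 cu
        · exact h2
      exact ⟨Or.inr ⟨cv, huL⟩, by rw [cv]; exact (h _ huL).symm⟩

variable {V : Type*}

/-- Path subgraph on four vertices `a-b-c-d`. -/
def path4Sub (G : SimpleGraph V) (a b c d : V) : G.Subgraph where
  verts := {a, b, c, d}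
  Adj u v := (s(u,v) = s(a,b) ∨ s(u,v) = s(b,c) ∨ s(u,v) = s(c,d)) ∧ G.Adj u v
  adj_sub h := h.2
  edge_vert := by
    rintro u v ⟨h1 | h1 | h1, _⟩ <;> rw [Sym2.eq_iff] at h1 <;>
      rcases h1 with ⟨rfl, rfl⟩ | ⟨rfl, rfl⟩ <;> simp
  symm := by
    constructor
    rintro u v ⟨h1, h2⟩
    refine ⟨?_, h2.symm⟩
    rwa [show s(v,u) = s(u,v) from Sym2.eq_swap]

lemma path4Sub_verts (G : SimpleGraph V) (a b c d : V) :
    (path4Sub G a b c d).verts = {a, b, c, d} := rfl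

lemma path4Sub_edge {G : SimpleGraph V} {a b c d : V} {e : Sym2 V}
    (he : e ∈ (path4Sub G a b c d).edgeSet) :
    e = s(a,b) ∨ e = s(b,c) ∨ e = s(c,d) := by
  induction e with
  | _ u v => exact he.1

lemma path4Sub_isTree {G : SimpleGraph V} {a b c d : V}
    (hab : a ≠ b) (hac : a ≠ c) (had : a ≠ d) (hbc : b ≠ c) (hbd : b ≠ d) (hcd : c ≠ d)
    (hAB : G.Adj a b) (hBC : G.Adj b c) (hCD : G.Adj c d) :
    (path4Sub G a b c d).coe.IsTree := by
  have hA : a ∈ (path4Sub G a b c d).verts := by simp [path4Sub_verts]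
  have hB : b ∈ (path4Sub G a b c d).verts := by simp [path4Sub_verts]
  have hC : c ∈ (path4Sub G a b c d).verts := by simp [path4Sub_verts]
  have hD : d ∈ (path4Sub G a b c d).verts := by simp [path4Sub_verts]
  apply path4_isTree _ ⟨a, hA⟩ ⟨b, hB⟩ ⟨c, hC⟩ ⟨d, hD⟩
  · intro v
    have hv := v.2
    rcases hv with h | h | h | h
    · exact Or.inl (Subtype.ext h)
    · exact Or.inr (Or.inl (Subtype.ext h))
    · exact Or.inr (Or.inr (Or.inl (Subtype.ext h)))
    · exact Or.inr (Or.inr (Or.inr (Subtype.ext h)))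
  · exact fun h => hab (congrArg Subtype.val h)
  · exact fun h => hac (congrArg Subtype.val h)
  · exact fun h => had (congrArg Subtype.val h)
  · exact fun h => hbc (congrArg Subtype.val h)
  · exact fun h => hbd (congrArg Subtype.val h)
  · exact fun h => hcd (congrArg Subtype.val h)
  · intro u v
    have key : ∀ (x y : V) (hx : x ∈ (path4Sub G a b c d).verts)
        (hy : y ∈ (path4Sub G a b c d).verts),
        (s(u,v) = s((⟨x,hx⟩ : ↥(path4Sub G a b c d).verts), ⟨y,hy⟩))
          ↔ s((u:V), (v:V)) = s(x, y) := by
      intro x y hx hy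
      rw [Sym2.eq_iff, Sym2.eq_iff]
      simp [Subtype.ext_iff]
    rw [key, key, key]
    constructor
    · rintro ⟨h1, _⟩
      exact h1
    · intro h1
      refine ⟨h1, ?_⟩
      rcases h1 with h1 | h1 | h1 <;> rw [Sym2.eq_iff] at h1 <;>
        rcases h1 with ⟨h2, h3⟩ | ⟨h2, h3⟩ <;> rw [h2, h3]
      · exact hAB
      · exact hAB.symm
      · exact hBC
      · exact hBC.symm
      · exact hCD
      · exact hCD.symm
variable {V : Type*} [Fintype V] {G : SimpleGraph V}

omit [Fintype V] in
/-- A Steiner tree for a set with two distinct elements has an edge at each of them. -/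
lemma isSteinerTree_exists_adj {S : Set V} {T : G.Subgraph} (hT : G.IsSteinerTree S T)
    {u w : V} (hu : u ∈ S) (hw : w ∈ S) (hne : u ≠ w) : ∃ z, T.Adj u z := by
  have hc := hT.2.isConnected
  have hr : T.coe.Reachable ⟨u, hT.1 hu⟩ ⟨w, hT.1 hw⟩ := hc.preconnected _ _
  obtain ⟨z, hz⟩ := adj_of_reachable_ne hr (fun h => hne (congrArg Subtype.val h))
  exact ⟨z, hz⟩

/-- Counting: a family of edge-disjoint Steiner trees injects into the neighbors of `u`. -/
lemma steiner_family_le_degree {S : Set V} {m : ℕ} {T : Fin m → G.Subgraph}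
    (hT : ∀ i, G.IsSteinerTree S (T i))
    (hdisj : ∀ i j, i ≠ j → Disjoint (T i).edgeSet (T j).edgeSet)
    {u w : V} (hu : u ∈ S) (hw : w ∈ S) (hne : u ≠ w) :
    m ≤ (G.neighborSet u).ncard := by
  have hz : ∀ i, ∃ z, (T i).Adj u z := fun i => isSteinerTree_exists_adj (hT i) hu hw hne
  choose z hzAdj using hz
  have hrange : Set.range z ⊆ G.neighborSet u := by
    rintro _ ⟨i, rfl⟩
    exact (T i).adj_sub (hzAdj i)
  have hinj : Function.Injective z := by
    intro i j hij
    by_contra hne2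
    have h1 : s(u, z i) ∈ (T i).edgeSet := (hzAdj i)
    have h2 : s(u, z i) ∈ (T j).edgeSet := by rw [hij]; exact (hzAdj j)
    exact Set.not_disjoint_iff.2 ⟨_, h1, h2⟩ (hdisj i j hne2)
  calc m = (Set.range z).ncard := by
        rw [← Nat.card_coe_set_eq, Nat.card_range_of_injective hinj,
          Nat.card_eq_fintype_card, Fintype.card_fin]
    _ ≤ (G.neighborSet u).ncard := Set.ncard_le_ncard hrange (Set.toFinite _)

lemma adj_of_reachable_ne' : True := trivial

lemma zero_mem_steiner_set {S : Set V} :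
    0 ∈ {n | ∃ T : Fin n → G.Subgraph, (∀ i, G.IsSteinerTree S (T i)) ∧
      ∀ i j, i ≠ j → Disjoint (T i).edgeSet (T j).edgeSet} :=
  ⟨Fin.elim0, fun i => i.elim0, fun i => i.elim0⟩

lemma steiner_set_bddAbove {S : Set V} {u w : V} (hu : u ∈ S) (hw : w ∈ S) (hne : u ≠ w) :
    BddAbove {n | ∃ T : Fin n → G.Subgraph, (∀ i, G.IsSteinerTree S (T i)) ∧
      ∀ i j, i ≠ j → Disjoint (T i).edgeSet (T j).edgeSet} := by
  refine ⟨(G.neighborSet u).ncard, ?_⟩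
  rintro m ⟨T, hT, hdisj⟩
  exact steiner_family_le_degree hT hdisj hu hw hne

lemma steinerLambda_le_ncard_neighborSet {S : Set V} {u w : V}
    (hu : u ∈ S) (hw : w ∈ S) (hne : u ≠ w) :
    G.steinerLambda S ≤ (G.neighborSet u).ncard := by
  apply csSup_le ⟨0, zero_mem_steiner_set⟩
  rintro m ⟨T, hT, hdisj⟩
  exact steiner_family_le_degree hT hdisj hu hw hne

lemma le_steinerLambda_of_family {S : Set V} {k : ℕ} (T : Fin k → G.Subgraph)
    (hT : ∀ i, G.IsSteinerTree S (T i))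
    (hdisj : ∀ i j, i ≠ j → Disjoint (T i).edgeSet (T j).edgeSet)
    {u w : V} (hu : u ∈ S) (hw : w ∈ S) (hne : u ≠ w) :
    k ≤ G.steinerLambda S :=
  le_csSup (steiner_set_bddAbove hu hw hne) ⟨T, hT, hdisj⟩

lemma exists_family_of_le_steinerLambda {S : Set V} {k : ℕ}
    {u w : V} (hu : u ∈ S) (hw : w ∈ S) (hne : u ≠ w)
    (hk : k ≤ G.steinerLambda S) :
    ∃ T : Fin k → G.Subgraph, (∀ i, G.IsSteinerTree S (T i)) ∧
      ∀ i j, i ≠ j → Disjoint (T i).edgeSet (T j).edgeSet := by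
  have hmem := Nat.sSup_mem (s := {n | ∃ T : Fin n → G.Subgraph,
      (∀ i, G.IsSteinerTree S (T i)) ∧
      ∀ i j, i ≠ j → Disjoint (T i).edgeSet (T j).edgeSet})
    ⟨0, zero_mem_steiner_set⟩ (steiner_set_bddAbove hu hw hne)
  obtain ⟨T, hT, hdisj⟩ := hmem
  refine ⟨fun i => T (Fin.castLE hk i), fun i => hT _, fun i j hij => ?_⟩
  exact hdisj _ _ (fun h => hij (Fin.castLE_injective hk h))

lemma ncard_neighborSet_le_sub_two {u v : V} (huv : ¬ G.Adj u v) (hne : u ≠ v) :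
    (G.neighborSet u).ncard ≤ Fintype.card V - 2 := by
  have hsub : G.neighborSet u ⊆ Set.univ \ {u, v} := by
    intro z hz
    refine ⟨Set.mem_univ _, ?_⟩
    rintro (rfl | rfl)
    · exact G.irrefl hz
    · exact huv hz
  calc (G.neighborSet u).ncard ≤ (Set.univ \ {u, v} : Set V).ncard :=
        Set.ncard_le_ncard hsub (Set.toFinite _)
    _ = Fintype.card V - 2 := by
        rw [Set.ncard_diff (Set.subset_univ _), Set.ncard_univ, Set.ncard_pair hne,
          Nat.card_eq_fintype_card]

lemma ncard_neighborSet_le_sub_three {u v w : V} (huv : ¬ G.Adj u v) (huw : ¬ G.Adj u w)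
    (hne : u ≠ v) (hne2 : u ≠ w) (hne3 : v ≠ w) :
    (G.neighborSet u).ncard ≤ Fintype.card V - 3 := by
  have hsub : G.neighborSet u ⊆ Set.univ \ {u, v, w} := by
    intro z hz
    refine ⟨Set.mem_univ _, ?_⟩
    rintro (rfl | rfl | rfl)
    · exact G.irrefl hz
    · exact huv hz
    · exact huw hz
  have hcard : ({u, v, w} : Set V).ncard = 3 := by
    rw [Set.ncard_insert_of_notMem (by simp [hne, hne2]), Set.ncard_pair hne3]
  calc (G.neighborSet u).ncard ≤ (Set.univ \ {u, v, w} : Set V).ncard :=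
        Set.ncard_le_ncard hsub (Set.toFinite _)
    _ = Fintype.card V - 3 := by
        rw [Set.ncard_diff (Set.subset_univ _), Set.ncard_univ, hcard,
          Nat.card_eq_fintype_card]

/-- The complete graph minus the edge `s(p,q)`. -/
def KminusEdge (V : Type*) (p q : V) : SimpleGraph V where
  Adj a b := a ≠ b ∧ s(a, b) ≠ s(p, q)
  symm := by
    constructor
    rintro a b ⟨h1, h2⟩
    exact ⟨h1.symm, by rwa [show s(b,a) = s(a,b) from Sym2.eq_swap]⟩
  loopless := ⟨fun a h => h.1 rfl⟩

lemma KminusEdge_adj {p q a b : V} :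
    (KminusEdge V p q).Adj a b ↔ a ≠ b ∧ s(a, b) ≠ s(p, q) := Iff.rfl

lemma KminusEdge_symm (p q : V) : KminusEdge V p q = KminusEdge V q p := by
  ext a b
  rw [KminusEdge_adj, KminusEdge_adj, show s(q,p) = s(p,q) from Sym2.eq_swap]

lemma KminusEdge_adj_of {p q a b : V} (hab : a ≠ b) (h : a ≠ p ∧ a ≠ q ∨ b ≠ p ∧ b ≠ q) :
    (KminusEdge V p q).Adj a b := by
  refine ⟨hab, fun he => ?_⟩
  rw [Sym2.eq_iff] at he
  tauto

lemma KminusEdge_edgeSet (p q : V) :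
    (KminusEdge V p q).edgeSet = (⊤ : SimpleGraph V).edgeSet \ {s(p, q)} := by
  ext e
  induction e with
  | _ a b =>
    simp only [mem_edgeSet, KminusEdge_adj, Set.mem_diff, top_adj, Set.mem_singleton_iff]

lemma le_steinerLambda_of_fintype_family {S : Set V} {ι : Type*} [Fintype ι]
    (F : ι → G.Subgraph) (hF : ∀ i, G.IsSteinerTree S (F i))
    (hdisj : ∀ i j, i ≠ j → Disjoint (F i).edgeSet (F j).edgeSet)
    {u w : V} (hu : u ∈ S) (hw : w ∈ S) (hne : u ≠ w) :
    Fintype.card ι ≤ G.steinerLambda S := by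
  let e := (Fintype.equivFin ι).symm
  exact le_steinerLambda_of_family (fun i => F (e i)) (fun i => hF _)
    (fun i j hij => hdisj _ _ (fun h => hij (e.injective h))) hu hw hne

lemma disjoint_starSub_starSub {z z' : V} {L L' : Set V}
    (hzz' : z ≠ z') (h : z ∉ L' ∨ z' ∉ L) :
    Disjoint (starSub G z L).edgeSet (starSub G z' L').edgeSet := by
  rw [Set.disjoint_left]
  intro e he he'
  obtain ⟨l, hl, rfl⟩ := starSub_edge he
  obtain ⟨l', hl', heq⟩ := starSub_edge he'
  rw [Sym2.eq_iff] at heq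
  rcases heq with ⟨h1, h2⟩ | ⟨h1, h2⟩
  · exact hzz' h1
  · rcases h with h | h
    · exact h (h1 ▸ hl')
    · exact h (h2 ▸ hl)

lemma starSub_isSteiner {S : Set V} {z : V} {L : Set V} (hS : S ⊆ insert z L)
    (hadj : ∀ l ∈ L, G.Adj z l) : G.IsSteinerTree S (starSub G z L) :=
  ⟨hS, starSub_isTree hadj⟩

variable [DecidableEq V]

lemma triple_card {a b c : V} (hab : a ≠ b) (hac : a ≠ c) (hbc : b ≠ c) :
    ({a, b, c} : Finset V).card = 3 := by
  rw [Finset.card_insert_of_notMem (by simp [hab, hac]),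
    Finset.card_insert_of_notMem (by simp [hbc]), Finset.card_singleton]

lemma card_option_coe {a b c : V} (hab : a ≠ b) (hac : a ≠ c) (hbc : b ≠ c) :
    Fintype.card (Option ↥(Finset.univ \ {a, b, c} : Finset V)) = Fintype.card V - 2 := by
  have h3 : 3 ≤ Fintype.card V := by
    have : ({a, b, c} : Finset V).card ≤ Fintype.card V := by
      simpa using Finset.card_le_univ ({a, b, c} : Finset V)
    rwa [triple_card hab hac hbc] at this
  rw [Fintype.card_option, Fintype.card_coe,
    Finset.card_sdiff_of_subset (Finset.subset_univ _), triple_card hab hac hbc,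
    Finset.card_univ]
  omega

lemma mem_sdiff_triple {a b c : V} (w : ↥(Finset.univ \ {a, b, c} : Finset V)) :
    (w : V) ≠ a ∧ (w : V) ≠ b ∧ (w : V) ≠ c := by
  have hw := w.2
  rw [Finset.mem_sdiff] at hw
  have := hw.2
  simp only [Finset.mem_insert, Finset.mem_singleton, not_or] at this
  exact this

/-- family for cases where at most one endpoint of the missing edge is in `S`,
with a star inside `S` and stars from outside. -/
def famF {V : Type*} (G : SimpleGraph V) (z : V) (L1 L2 : Set V) (O : Finset V) :
    Option ↥O → G.Subgraph
  | none => starSub G z L1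
  | some w => starSub G ↑w L2

lemma case1 (p q a b c : V) (hab : a ≠ b) (hac : a ≠ c) (hbc : b ≠ c)
    (hpS : p ∉ ({a, b, c} : Set V)) (hqS : q ∉ ({a, b, c} : Set V)) :
    Fintype.card V - 2 ≤ (KminusEdge V p q).steinerLambda {a, b, c} := by
  have hap : a ≠ p := by rintro rfl; exact hpS (by simp)
  have hbp : b ≠ p := by rintro rfl; exact hpS (by simp)
  have hcp : c ≠ p := by rintro rfl; exact hpS (by simp)
  have haq : a ≠ q := by rintro rfl; exact hqS (by simp)
  have hbq : b ≠ q := by rintro rfl; exact hqS (by simp)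
  have hcq : c ≠ q := by rintro rfl; exact hqS (by simp)
  set G := KminusEdge V p q with hG
  set O : Finset V := Finset.univ \ {a, b, c} with hO
  have hSteiner : ∀ i, G.IsSteinerTree {a, b, c} (famF G b {a, c} {a, b, c} O i) := by
    rintro (_ | w)
    · refine starSub_isSteiner ?_ ?_
      · rintro x (rfl | rfl | rfl) <;> simp
      · rintro l (rfl | rfl)
        · exact KminusEdge_adj_of hab.symm (Or.inl ⟨hbp, hbq⟩)
        · exact KminusEdge_adj_of hbc (Or.inl ⟨hbp, hbq⟩)
    · obtain ⟨hwa, hwb, hwc⟩ := mem_sdiff_triple w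
      refine starSub_isSteiner (Set.subset_insert _ _) ?_
      rintro l (rfl | rfl | rfl)
      · exact KminusEdge_adj_of hwa (Or.inr ⟨hap, haq⟩)
      · exact KminusEdge_adj_of hwb (Or.inr ⟨hbp, hbq⟩)
      · exact KminusEdge_adj_of hwc (Or.inr ⟨hcp, hcq⟩)
  have hDisj : ∀ i j, i ≠ j →
      Disjoint (famF G b {a, c} {a, b, c} O i).edgeSet
        (famF G b {a, c} {a, b, c} O j).edgeSet := by
    have key : ∀ (w : ↥O), Disjoint (starSub G b {a, c}).edgeSet
        (starSub G (↑w) ({a, b, c} : Set V)).edgeSet := by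
      intro w
      obtain ⟨hwa, hwb, hwc⟩ := mem_sdiff_triple w
      refine disjoint_starSub_starSub (fun h => hwb h.symm) (Or.inr ?_)
      rintro (h | h)
      · exact hwa h
      · exact hwc h
    rintro (_ | w) (_ | w') hij
    · exact absurd rfl hij
    · exact key w'
    · exact (key w).symm
    · have hww' : (w : V) ≠ (w' : V) := fun h => hij (by rw [Subtype.ext h])
      refine disjoint_starSub_starSub hww' (Or.inl ?_)
      rintro (h | h | h)
      · exact (mem_sdiff_triple w).1 h
      · exact (mem_sdiff_triple w).2.1 h
      · exact (mem_sdiff_triple w).2.2 h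
  rw [← card_option_coe hab hac hbc]
  exact le_steinerLambda_of_fintype_family _ hSteiner hDisj
    (Set.mem_insert _ _) (by simp) hab

lemma star_path4_disjoint {V : Type*} {G : SimpleGraph V} {p q b c : V}
    (hpq : p ≠ q) (hpb : p ≠ b) (hpc : p ≠ c) (hbc : b ≠ c) (hqb : q ≠ b) (hqc : q ≠ c) :
    Disjoint (starSub G b {p, c}).edgeSet (path4Sub G b q c p).edgeSet := by
  rw [Set.disjoint_left]
  intro e he he'
  obtain ⟨l, hl, rfl⟩ := starSub_edge he
  have h3 := path4Sub_edge he'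
  rcases hl with rfl | rfl <;> rcases h3 with h | h | h <;>
    rw [Sym2.eq_iff] at h <;> tauto

lemma path4_star_disjoint {V : Type*} {G : SimpleGraph V} {p q b c w' : V}
    (hpq : p ≠ q) (hpb : p ≠ b) (hpc : p ≠ c) (hbc : b ≠ c) (hqb : q ≠ b) (hqc : q ≠ c)
    (hw'p : w' ≠ p) (hw'b : w' ≠ b) (hw'c : w' ≠ c) (hw'q : w' ≠ q) :
    Disjoint (path4Sub G b q c p).edgeSet (starSub G w' ({p, b, c} : Set V)).edgeSet := by
  rw [Set.disjoint_left]
  intro e he he'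
  obtain ⟨l, hl, rfl⟩ := starSub_edge he'
  have h3 := path4Sub_edge he
  rcases hl with rfl | rfl | rfl <;> rcases h3 with h | h | h <;>
    rw [Sym2.eq_iff] at h <;> tauto

def fam2F {V : Type*} [DecidableEq V] (G : SimpleGraph V) (p q b c : V) (O : Finset V) :
    Option ↥O → G.Subgraph
  | none => starSub G b {p, c}
  | some w => if (w : V) = q then path4Sub G b q c p else starSub G ↑w {p, b, c}

lemma case2 (p q b c : V) (hpq : p ≠ q) (hpb : p ≠ b) (hpc : p ≠ c) (hbc : b ≠ c)
    (hqb : q ≠ b) (hqc : q ≠ c) :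
    Fintype.card V - 2 ≤ (KminusEdge V p q).steinerLambda {p, b, c} := by
  set G := KminusEdge V p q with hG
  set O : Finset V := Finset.univ \ {p, b, c} with hO
  have hAdj_bp : G.Adj b p := KminusEdge_adj_of hpb.symm (Or.inl ⟨hpb.symm, hqb.symm⟩)
  have hAdj_bc : G.Adj b c := KminusEdge_adj_of hbc (Or.inl ⟨hpb.symm, hqb.symm⟩)
  have hAdj_bq : G.Adj b q := KminusEdge_adj_of hqb.symm (Or.inl ⟨hpb.symm, hqb.symm⟩)
  have hAdj_qc : G.Adj q c := KminusEdge_adj_of hqc (Or.inr ⟨hpc.symm, hqc.symm⟩)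
  have hAdj_cp : G.Adj c p := KminusEdge_adj_of hpc.symm (Or.inl ⟨hpc.symm, hqc.symm⟩)
  have hSteiner : ∀ i, G.IsSteinerTree {p, b, c} (fam2F G p q b c O i) := by
    rintro (_ | w)
    · refine starSub_isSteiner ?_ ?_
      · rintro x (rfl | rfl | rfl) <;> simp
      · rintro l (rfl | rfl)
        · exact hAdj_bp
        · exact hAdj_bc
    · obtain ⟨hwp, hwb, hwc⟩ := mem_sdiff_triple w
      by_cases hwq : (w : V) = q
      · simp only [fam2F, if_pos hwq]
        constructor
        · rw [path4Sub_verts]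
          rintro x (rfl | rfl | rfl)
          · simp
          · simp
          · simp
        · exact path4Sub_isTree hqb.symm hbc hpb.symm hqc hpq.symm hpc.symm
            hAdj_bq hAdj_qc hAdj_cp
      · simp only [fam2F, if_neg hwq]
        refine starSub_isSteiner (Set.subset_insert _ _) ?_
        rintro l (rfl | rfl | rfl)
        · exact KminusEdge_adj_of hwp (Or.inl ⟨hwp, hwq⟩)
        · exact KminusEdge_adj_of hwb (Or.inl ⟨hwp, hwq⟩)
        · exact KminusEdge_adj_of hwc (Or.inl ⟨hwp, hwq⟩)
  have hDisj : ∀ i j, i ≠ j →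
      Disjoint (fam2F G p q b c O i).edgeSet (fam2F G p q b c O j).edgeSet := by
    have key1 : ∀ (w : ↥O), (w : V) = q → Disjoint (starSub G b {p, c}).edgeSet
        (path4Sub G b q c p).edgeSet := by
      intro w hwq
      exact star_path4_disjoint hpq hpb hpc hbc hqb hqc
    have key2 : ∀ (w : ↥O), (w : V) ≠ q → Disjoint (starSub G b {p, c}).edgeSet
        (starSub G (w : V) ({p, b, c} : Set V)).edgeSet := by
      intro w hwq
      obtain ⟨hwp, hwb, hwc⟩ := mem_sdiff_triple w
      refine disjoint_starSub_starSub (fun h => hwb h.symm) (Or.inr ?_)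
      rintro (h | h)
      · exact hwp h
      · exact hwc h
    have key3 : ∀ (w w' : ↥O), (w : V) = q → (w' : V) ≠ q →
        Disjoint (path4Sub G b q c p).edgeSet
          (starSub G (w' : V) ({p, b, c} : Set V)).edgeSet := by
      intro w w' hwq hw'q
      obtain ⟨hw'p, hw'b, hw'c⟩ := mem_sdiff_triple w'
      exact path4_star_disjoint hpq hpb hpc hbc hqb hqc hw'p hw'b hw'c hw'q
    have key4 : ∀ (w w' : ↥O), (w : V) ≠ q → (w' : V) ≠ q → (w : V) ≠ (w' : V) →
        Disjoint (starSub G (w : V) ({p, b, c} : Set V)).edgeSet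
          (starSub G (w' : V) ({p, b, c} : Set V)).edgeSet := by
      intro w w' hwq hw'q hww'
      obtain ⟨hwp, hwb, hwc⟩ := mem_sdiff_triple w
      refine disjoint_starSub_starSub hww' (Or.inl ?_)
      rintro (h | h | h)
      · exact hwp h
      · exact hwb h
      · exact hwc h
    rintro (_ | w) (_ | w') hij
    · exact absurd rfl hij
    · by_cases hw'q : (w' : V) = q
      · simp only [fam2F, if_pos hw'q]
        exact key1 w' hw'q
      · simp only [fam2F, if_neg hw'q]
        exact key2 w' hw'q
    · by_cases hwq : (w : V) = q
      · simp only [fam2F, if_pos hwq]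
        exact (key1 w hwq).symm
      · simp only [fam2F, if_neg hwq]
        exact (key2 w hwq).symm
    · have hww' : (w : V) ≠ (w' : V) := fun h => hij (by rw [Subtype.ext h])
      by_cases hwq : (w : V) = q <;> by_cases hw'q : (w' : V) = q
      · exact absurd (hwq.trans hw'q.symm) hww'
      · simp only [fam2F, if_pos hwq, if_neg hw'q]
        exact key3 w w' hwq hw'q
      · simp only [fam2F, if_neg hwq, if_pos hw'q]
        exact (key3 w' w hw'q hwq).symm
      · simp only [fam2F, if_neg hwq, if_neg hw'q]
        exact key4 w w' hwq hw'q hww'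
  rw [← card_option_coe hpb hpc hbc]
  exact le_steinerLambda_of_fintype_family _ hSteiner hDisj
    (Set.mem_insert _ _) (by simp) hpb

lemma case3 (p q c : V) (hpq : p ≠ q) (hpc : p ≠ c) (hqc : q ≠ c) :
    Fintype.card V - 2 ≤ (KminusEdge V p q).steinerLambda {p, q, c} := by
  set G := KminusEdge V p q with hG
  set O : Finset V := Finset.univ \ {p, q, c} with hO
  have hSteiner : ∀ i, G.IsSteinerTree {p, q, c} (famF G c {p, q} {p, q, c} O i) := by
    rintro (_ | w)
    · refine starSub_isSteiner ?_ ?_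
      · rintro x (rfl | rfl | rfl) <;> simp
      · rintro l (rfl | rfl)
        · exact KminusEdge_adj_of hpc.symm (Or.inl ⟨hpc.symm, hqc.symm⟩)
        · exact KminusEdge_adj_of hqc.symm (Or.inl ⟨hpc.symm, hqc.symm⟩)
    · obtain ⟨hwp, hwq, hwc⟩ := mem_sdiff_triple w
      refine starSub_isSteiner (Set.subset_insert _ _) ?_
      rintro l (rfl | rfl | rfl)
      · exact KminusEdge_adj_of hwp (Or.inl ⟨hwp, hwq⟩)
      · exact KminusEdge_adj_of hwq (Or.inl ⟨hwp, hwq⟩)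
      · exact KminusEdge_adj_of hwc (Or.inl ⟨hwp, hwq⟩)
  have hDisj : ∀ i j, i ≠ j →
      Disjoint (famF G c {p, q} {p, q, c} O i).edgeSet
        (famF G c {p, q} {p, q, c} O j).edgeSet := by
    have key : ∀ (w : ↥O), Disjoint (starSub G c {p, q}).edgeSet
        (starSub G (↑w) ({p, q, c} : Set V)).edgeSet := by
      intro w
      obtain ⟨hwp, hwq, hwc⟩ := mem_sdiff_triple w
      refine disjoint_starSub_starSub (fun h => hwc h.symm) (Or.inr ?_)
      rintro (h | h)
      · exact hwp h
      · exact hwq h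
    rintro (_ | w) (_ | w') hij
    · exact absurd rfl hij
    · exact key w'
    · exact (key w).symm
    · have hww' : (w : V) ≠ (w' : V) := fun h => hij (by rw [Subtype.ext h])
      refine disjoint_starSub_starSub hww' (Or.inl ?_)
      rintro (h | h | h)
      · exact (mem_sdiff_triple w).1 h
      · exact (mem_sdiff_triple w).2.1 h
      · exact (mem_sdiff_triple w).2.2 h
  rw [← card_option_coe hpq hpc hqc]
  exact le_steinerLambda_of_fintype_family _ hSteiner hDisj
    (Set.mem_insert _ _) (by simp) hpq

lemma case3' (p q : V) (hpq : p ≠ q) (S : Set V) (hS : S.ncard = 3)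
    (hp : p ∈ S) (hq : q ∈ S) :
    Fintype.card V - 2 ≤ (KminusEdge V p q).steinerLambda S := by
  have hsub : ({p, q} : Set V) ⊆ S := by
    rintro x (rfl | rfl)
    · exact hp
    · exact hq
  have hdiff : (S \ {p, q}).ncard = 1 := by
    rw [Set.ncard_diff hsub (Set.toFinite _), hS, Set.ncard_pair hpq]
  obtain ⟨c, hc⟩ := Set.ncard_eq_one.1 hdiff
  have hcS : c ∈ S \ {p, q} := by rw [hc]; exact rfl
  have hcp : c ≠ p := fun h => hcS.2 (by simp [h])
  have hcq : c ≠ q := fun h => hcS.2 (by simp [h])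
  have hSeq : S = {p, q, c} := by
    ext x
    constructor
    · intro hx
      by_cases hxp : x = p
      · exact Or.inl hxp
      · by_cases hxq : x = q
        · exact Or.inr (Or.inl hxq)
        · have : x ∈ S \ {p, q} := ⟨hx, by simp [hxp, hxq]⟩
          rw [hc] at this
          exact Or.inr (Or.inr this)
    · rintro (rfl | rfl | rfl)
      · exact hp
      · exact hq
      · exact hcS.1
  rw [hSeq]
  exact case3 p q c hpq hcp.symm hcq.symm

lemma case2' (p q : V) (hpq : p ≠ q) (S : Set V) (hS : S.ncard = 3)
    (hp : p ∈ S) (hq : q ∉ S) :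
    Fintype.card V - 2 ≤ (KminusEdge V p q).steinerLambda S := by
  have hdiff : (S \ {p}).ncard = 2 := by
    rw [Set.ncard_diff (by simpa using hp) (Set.toFinite _), hS, Set.ncard_singleton]
  obtain ⟨b, c, hbc, hc⟩ := Set.ncard_eq_two.1 hdiff
  have hbS : b ∈ S \ {p} := by rw [hc]; exact Or.inl rfl
  have hcS : c ∈ S \ {p} := by rw [hc]; exact Or.inr rfl
  have hpb : p ≠ b := fun h => hbS.2 (by simp [h.symm])
  have hpc : p ≠ c := fun h => hcS.2 (by simp [h.symm])
  have hqb : q ≠ b := fun h => hq (h ▸ hbS.1)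
  have hqc : q ≠ c := fun h => hq (h ▸ hcS.1)
  have hSeq : S = {p, b, c} := by
    ext x
    constructor
    · intro hx
      by_cases hxp : x = p
      · exact Or.inl hxp
      · have : x ∈ S \ {p} := ⟨hx, by simp [hxp]⟩
        rw [hc] at this
        exact Or.inr this
    · rintro (rfl | rfl | rfl)
      · exact hp
      · exact hbS.1
      · exact hcS.1
  rw [hSeq]
  exact case2 p q b c hpq hpb hpc hbc hqb hqc

lemma lambda_ge_KminusEdge (p q : V) (hpq : p ≠ q) (S : Set V) (hS : S.ncard = 3) :
    Fintype.card V - 2 ≤ (KminusEdge V p q).steinerLambda S := by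
  by_cases hp : p ∈ S <;> by_cases hq : q ∈ S
  · exact case3' p q hpq S hS hp hq
  · exact case2' p q hpq S hS hp hq
  · rw [KminusEdge_symm]
    exact case2' q p hpq.symm S hS hq hp
  · obtain ⟨a, b, c, hab, hac, hbc, rfl⟩ := Set.ncard_eq_three.1 hS
    exact case1 p q a b c hab hac hbc hp hq

lemma not_adj_KminusEdge (p q : V) : ¬ (KminusEdge V p q).Adj p q := by
  rw [KminusEdge_adj]
  tauto

lemma genEdgeConn_KminusEdge (p q r : V) (hpq : p ≠ q) (hpr : p ≠ r) (hqr : q ≠ r) :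
    (KminusEdge V p q).genEdgeConn 3 = Fintype.card V - 2 := by
  have hS3 : ({p, q, r} : Set V).ncard = 3 :=
    Set.ncard_eq_three.2 ⟨p, q, r, hpq, hpr, hqr, rfl⟩
  have hmem : (KminusEdge V p q).steinerLambda {p, q, r} ∈
      {m | ∃ S : Set V, S.ncard = 3 ∧ (KminusEdge V p q).steinerLambda S = m} :=
    ⟨{p, q, r}, hS3, rfl⟩
  apply le_antisymm
  · have h1 := Nat.sInf_le hmem
    have h2 : (KminusEdge V p q).steinerLambda {p, q, r} ≤
        ((KminusEdge V p q).neighborSet p).ncard :=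
      steinerLambda_le_ncard_neighborSet (Set.mem_insert _ _) (by simp) hpq
    have h3 := ncard_neighborSet_le_sub_two (not_adj_KminusEdge p q) hpq
    exact le_trans h1 (le_trans h2 h3)
  · apply le_csInf ⟨_, hmem⟩
    rintro m ⟨S, hS, rfl⟩
    exact lambda_ge_KminusEdge p q hpq S hS

lemma ncard_edgeSet_KminusEdge (p q : V) (hpq : p ≠ q) :
    (KminusEdge V p q).edgeSet.ncard = (Fintype.card V).choose 2 - 1 := by
  rw [KminusEdge_edgeSet]
  have hmem : ({s(p,q)} : Set (Sym2 V)) ⊆ (⊤ : SimpleGraph V).edgeSet := by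
    simp [hpq]
  rw [Set.ncard_diff hmem (Set.toFinite _), Set.ncard_singleton]
  congr 1
  rw [Set.ncard_eq_toFinset_card']
  have : ((⊤ : SimpleGraph V).edgeSet).toFinset = (⊤ : SimpleGraph V).edgeFinset := rfl
  rw [this, card_edgeFinset_top_eq_card_choose_two]

lemma cover_neighbors {S : Set V} {m : ℕ} {T : Fin m → G.Subgraph}
    (hT : ∀ i, G.IsSteinerTree S (T i))
    (hdisj : ∀ i j, i ≠ j → Disjoint (T i).edgeSet (T j).edgeSet)
    {u w : V} (hu : u ∈ S) (hw : w ∈ S) (hne : u ≠ w)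
    (hcard : (G.neighborSet u).ncard ≤ m) :
    ∃ a : Fin m → V, (∀ i, (T i).Adj u (a i)) ∧ (∀ i z, (T i).Adj u z → z = a i) ∧
      (∀ z ∈ G.neighborSet u, ∃ i, a i = z) := by
  have hz : ∀ i, ∃ z, (T i).Adj u z := fun i => isSteinerTree_exists_adj (hT i) hu hw hne
  choose a haAdj using hz
  have hrange : Set.range a ⊆ G.neighborSet u := by
    rintro _ ⟨i, rfl⟩
    exact (T i).adj_sub (haAdj i)
  have hinj : Function.Injective a := by
    intro i j hij
    by_contra hne2
    have h1 : s(u, a i) ∈ (T i).edgeSet := haAdj i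
    have h2 : s(u, a i) ∈ (T j).edgeSet := by rw [hij]; exact haAdj j
    exact Set.not_disjoint_iff.2 ⟨_, h1, h2⟩ (hdisj i j hne2)
  have hrcard : (Set.range a).ncard = m := by
    rw [← Nat.card_coe_set_eq, Nat.card_range_of_injective hinj,
      Nat.card_eq_fintype_card, Fintype.card_fin]
  have hEq : G.neighborSet u = Set.range a := by
    apply (Set.eq_of_subset_of_ncard_le hrange (by rw [hrcard]; exact hcard)
      (Set.toFinite _)).symm
  refine ⟨a, haAdj, ?_, ?_⟩
  · intro i z hzAdj
    have hzN : z ∈ G.neighborSet u := (T i).adj_sub hzAdj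
    rw [hEq] at hzN
    obtain ⟨j, rfl⟩ := hzN
    rcases eq_or_ne j i with rfl | hij
    · rfl
    · exfalso
      have h1 : s(u, a j) ∈ (T i).edgeSet := hzAdj
      have h2 : s(u, a j) ∈ (T j).edgeSet := haAdj j
      exact Set.not_disjoint_iff.2 ⟨_, h1, h2⟩ (hdisj i j (fun h => hij h.symm))
  · intro z hzN
    rw [hEq] at hzN
    exact hzN

lemma caseA {u v w : V} (huv : ¬ G.Adj u v) (huw : ¬ G.Adj u w)
    (hne1 : u ≠ v) (hne2 : u ≠ w) (hne3 : v ≠ w)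
    (hlam : ∀ S : Set V, S.ncard = 3 → Fintype.card V - 2 ≤ G.steinerLambda S)
    (hn : 3 ≤ Fintype.card V) : False := by
  have hS : ({u, v, w} : Set V).ncard = 3 :=
    Set.ncard_eq_three.2 ⟨u, v, w, hne1, hne2, hne3, rfl⟩
  have h1 := hlam _ hS
  have h2 : G.steinerLambda {u, v, w} ≤ (G.neighborSet u).ncard :=
    steinerLambda_le_ncard_neighborSet (Set.mem_insert _ _) (by simp) hne1
  have h3 := ncard_neighborSet_le_sub_three huv huw hne1 hne2 hne3
  omega

lemma caseB {u v x y : V} (huv : ¬ G.Adj u v) (hxy : ¬ G.Adj x y) (hux : G.Adj u x)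
    (huv' : u ≠ v) (hxy' : x ≠ y) (hux' : u ≠ x) (hvx : v ≠ x)
    (hlam : ∀ S : Set V, S.ncard = 3 → Fintype.card V - 2 ≤ G.steinerLambda S)
    (hn : 3 ≤ Fintype.card V) : False := by
  have hS3 : ({u, v, x} : Set V).ncard = 3 :=
    Set.ncard_eq_three.2 ⟨u, v, x, huv', hux', hvx, rfl⟩
  have huS : u ∈ ({u, v, x} : Set V) := Set.mem_insert _ _
  have hvS : v ∈ ({u, v, x} : Set V) := by simp
  have hxS : x ∈ ({u, v, x} : Set V) := by simp
  obtain ⟨T, hT, hdisj⟩ := exists_family_of_le_steinerLambda huS hvS huv'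
    (hlam _ hS3)
  obtain ⟨a, haAdj, haUniq, haSurj⟩ := cover_neighbors hT hdisj huS hvS huv'
    (ncard_neighborSet_le_sub_two huv huv')
  obtain ⟨b, hbAdj, hbUniq, hbSurj⟩ := cover_neighbors hT hdisj hxS hvS hvx.symm
    (ncard_neighborSet_le_sub_two hxy hxy')
  obtain ⟨i₀, hi₀⟩ := haSurj x hux
  have hTux : (T i₀).Adj u x := hi₀ ▸ haAdj i₀
  obtain ⟨j₀, hj₀⟩ := hbSurj u hux.symm
  have hTxu : (T j₀).Adj x u := hj₀ ▸ hbAdj j₀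
  have hij : j₀ = i₀ := by
    by_contra hne
    have h1 : s(x, u) ∈ (T j₀).edgeSet := hTxu
    have h2 : s(x, u) ∈ (T i₀).edgeSet := by
      rw [show s(x,u) = s(u,x) from Sym2.eq_swap]
      exact hTux
    exact Set.not_disjoint_iff.2 ⟨_, h1, h2⟩ (hdisj j₀ i₀ hne)
  subst hij
  have humem : u ∈ (T j₀).verts := (hT j₀).1 huS
  have hvmem : v ∈ (T j₀).verts := (hT j₀).1 hvS
  have hconn := (hT j₀).2.isConnected
  refine closed_not_reachable (H := (T j₀).coe)
    (C := {z : ↥(T j₀).verts | (z : V) = u ∨ (z : V) = x}) ?_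
    (Or.inl rfl : ((⟨u, humem⟩ : ↥(T j₀).verts) : V) = u ∨ _)
    ?_ (hconn.preconnected ⟨u, humem⟩ ⟨v, hvmem⟩)
  · rintro z (hz | hz) z' hadj
    · have hadj' : (T j₀).Adj u (z' : V) := by
        rw [← hz]
        exact hadj
      have := haUniq j₀ _ hadj'
      rw [hi₀] at this
      exact Or.inr this
    · have hadj' : (T j₀).Adj x (z' : V) := by
        rw [← hz]
        exact hadj
      have := hbUniq j₀ _ hadj'
      rw [hj₀] at this
      exact Or.inl this
  · rintro (h | h)
    · exact huv' (by rw [← h])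
    · exact hvx (by rw [← h])

lemma ncard_top_edgeSet : ((⊤ : SimpleGraph V).edgeSet).ncard = (Fintype.card V).choose 2 := by
  rw [Set.ncard_eq_toFinset_card']
  have h : ((⊤ : SimpleGraph V).edgeSet).toFinset = (⊤ : SimpleGraph V).edgeFinset := rfl
  rw [h, card_edgeFinset_top_eq_card_choose_two]

lemma lower_bound {G : SimpleGraph V} (hn : 3 ≤ Fintype.card V)
    (hG : G.genEdgeConn 3 = Fintype.card V - 2) :
    (Fintype.card V).choose 2 - 1 ≤ G.edgeSet.ncard := by
  classical
  have hlam : ∀ S : Set V, S.ncard = 3 → Fintype.card V - 2 ≤ G.steinerLambda S := by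
    intro S hS
    have hmem : G.steinerLambda S ∈
        {m | ∃ S' : Set V, S'.ncard = 3 ∧ G.steinerLambda S' = m} := ⟨S, hS, rfl⟩
    have := Nat.sInf_le hmem
    rw [SimpleGraph.genEdgeConn] at hG
    omega
  by_contra hlt
  push_neg at hlt
  -- at least two missing edges
  have hsub : G.edgeSet ⊆ (⊤ : SimpleGraph V).edgeSet := by
    intro e he
    induction e with
    | _ a b => exact (G.ne_of_adj he)
  have hdcard : 1 < ((⊤ : SimpleGraph V).edgeSet \ G.edgeSet).ncard := by
    rw [Set.ncard_diff hsub (Set.toFinite _), ncard_top_edgeSet]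
    have hle : G.edgeSet.ncard ≤ (Fintype.card V).choose 2 := by
      rw [← ncard_top_edgeSet]
      exact Set.ncard_le_ncard hsub (Set.toFinite _)
    omega
  obtain ⟨e₁, e₂, he₁, he₂, hee⟩ := (Set.one_lt_ncard_iff (Set.toFinite _)).1 hdcard
  -- unpack the two missing edges
  induction e₁ with
  | _ u v =>
  induction e₂ with
  | _ x y =>
  have huv : ¬ G.Adj u v := fun h => he₁.2 h
  have hxy : ¬ G.Adj x y := fun h => he₂.2 h
  have huv' : u ≠ v := ((⊤ : SimpleGraph V).mem_edgeSet.1 he₁.1).ne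
  have hxy' : x ≠ y := ((⊤ : SimpleGraph V).mem_edgeSet.1 he₂.1).ne
  have hvu : ¬ G.Adj v u := fun h => huv h.symm
  have hyx : ¬ G.Adj y x := fun h => hxy h.symm
  have hne_sym2 : ¬ ((u = x ∧ v = y) ∨ (u = y ∧ v = x)) := by
    rw [← Sym2.eq_iff]
    exact hee
  push_neg at hne_sym2
  obtain ⟨hcase1, hcase2⟩ := hne_sym2
  by_cases hux' : u = x
  · -- u = x : missing edges share u; v ≠ y
    subst hux'
    exact caseA huv hxy huv' hxy' (hcase1 rfl) hlam hn
  · by_cases huy : u = y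
    · subst huy
      -- missing edges s(u,v) and s(x,u) share u
      have hvx : v ≠ x := hcase2 rfl
      exact caseA huv (fun h => hxy h.symm) huv' (fun h => hxy' h.symm) hvx hlam hn
    · by_cases hvx : v = x
      · subst hvx
        -- missing edges s(u,v), s(v,y) share v
        have huy2 : u ≠ y := huy
        exact caseA hvu hxy (fun h => huv' h.symm) hxy' huy2 hlam hn
      · by_cases hvy : v = y
        · subst hvy
          -- missing edges s(u,v), s(x,v) share v
          exact caseA hvu (fun h => hxy h.symm) (fun h => huv' h.symm)
            (fun h => hxy' h.symm) hux' hlam hn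
        · -- all four distinct
          by_cases hux : G.Adj u x
          · exact caseB huv hxy hux huv' hxy' hux' hvx hlam hn
          · exact caseA huv hux huv' hux' hvx hlam hn

theorem min_edges_lambda_three_eq_n_sub_two (n : ℕ) (hn : 3 ≤ n) :
    IsLeast {m : ℕ | ∃ G : SimpleGraph (Fin n),
        G.genEdgeConn 3 = n - 2 ∧ G.edgeSet.ncard = m}
      (n.choose 2 - 1) := by
  have hcard : Fintype.card (Fin n) = n := Fintype.card_fin n
  have h0 : (0 : ℕ) < n := by omega
  have h1 : (1 : ℕ) < n := by omega
  have h2 : (2 : ℕ) < n := by omega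
  set p : Fin n := ⟨0, h0⟩ with hp
  set q : Fin n := ⟨1, h1⟩ with hq
  set r : Fin n := ⟨2, h2⟩ with hr
  have hpq : p ≠ q := Fin.ne_of_val_ne (by simp)
  have hpr : p ≠ r := Fin.ne_of_val_ne (by simp)
  have hqr : q ≠ r := Fin.ne_of_val_ne (by simp [hq, hr])
  constructor
  · refine ⟨KminusEdge (Fin n) p q, ?_, ?_⟩
    · rw [genEdgeConn_KminusEdge p q r hpq hpr hqr, hcard]
    · rw [ncard_edgeSet_KminusEdge p q hpq, hcard]
  · rintro m ⟨G, hG1, rfl⟩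
    have h := lower_bound (G := G) (by rw [hcard]; exact hn)
      (by rw [hcard]; exact hG1)
    rwa [hcard] at h
end

section
/- If G is a graph of order n ≥ 11 with λ_3(G) = ℓ where 1 ≤ ℓ ≤ n − 4, then G has at least ⌈ℓ(ℓ+1)n/(2ℓ+1)⌉ edges. -/
open SimpleGraph

-- extraction lemma
lemma extract_trees {V : Type*} (G : SimpleGraph V) (ℓ : ℕ) (S : Set V)
    (hS : ℓ ≤ G.steinerLambda S) :
    ∃ T : Fin ℓ → G.Subgraph, (∀ i, G.IsSteinerTree S (T i)) ∧
      ∀ i j, i ≠ j → Disjoint (T i).edgeSet (T j).edgeSet := by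
  set A := {n | ∃ T : Fin n → G.Subgraph, (∀ i, G.IsSteinerTree S (T i)) ∧
    ∀ i j, i ≠ j → Disjoint (T i).edgeSet (T j).edgeSet} with hA
  have hdc : ∀ m n : ℕ, m ≤ n → n ∈ A → m ∈ A := by
    intro m n hmn ⟨T, h1, h2⟩
    exact ⟨fun i => T (Fin.castLE hmn i), fun i => h1 _,
      fun i j hij => h2 _ _ (fun e => hij (Fin.castLE_injective hmn e))⟩
  by_contra hc
  have hbd : ∀ n ∈ A, n < ℓ := by
    intro n hn
    by_contra hge
    exact hc (hdc ℓ n (le_of_not_gt hge) hn)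
  have hne : A.Nonempty := ⟨0, ⟨Fin.elim0, fun i => i.elim0, fun i => i.elim0⟩⟩
  rcases Nat.eq_zero_or_pos ℓ with h0 | h0
  · subst h0; exact hc (hdc 0 _ (Nat.zero_le _) hne.choose_spec)
  have hb : sSup A ≤ ℓ - 1 := csSup_le hne (fun n hn => by have := hbd n hn; omega)
  have he : G.steinerLambda S = sSup A := rfl
  omega

lemma lambda_ge {V : Type*} (G : SimpleGraph V) (ℓ : ℕ) (h : G.genEdgeConn 3 = ℓ)
    (S : Set V) (hS : S.ncard = 3) : ℓ ≤ G.steinerLambda S := by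
  rw [← h]
  exact Nat.sInf_le ⟨S, hS, rfl⟩

lemma tree_neighbor {V : Type*} {G : SimpleGraph V} {T : G.Subgraph}
    (ht : T.coe.IsTree) {u v : V} (hu : u ∈ T.verts) (hv : v ∈ T.verts)
    (huv : u ≠ v) : ∃ x, T.Adj u x := by
  obtain ⟨p⟩ := ht.isConnected.preconnected ⟨u, hu⟩ ⟨v, hv⟩
  cases p with
  | nil => exact absurd rfl huv
  | cons h q => exact ⟨_, h⟩

lemma stuck_walk {W : Type*} {H : SimpleGraph W} {a b : W}
    (ha : ∀ x, H.Adj a x → x = b) (hb : ∀ x, H.Adj b x → x = a) :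
    ∀ {c d : W} (_ : H.Walk c d), (c = a ∨ c = b) → (d = a ∨ d = b) := by
  intro c d p
  induction p with
  | nil => exact id
  | cons h q ih =>
    intro hc
    apply ih
    rcases hc with rfl | rfl
    · exact Or.inr (ha _ h)
    · exact Or.inl (hb _ h)

lemma exists_third {V : Type*} [Fintype V] (hcard : 3 ≤ Fintype.card V)
    (u v : V) : ∃ w, w ≠ u ∧ w ≠ v := by
  classical
  by_contra hc
  push_neg at hc
  have hsub : (Finset.univ : Finset V) ⊆ {u, v} := by
    intro w _
    rcases eq_or_ne w u with rfl | hne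
    · simp
    · simp [hc w hne]
  have h2 : ({u, v} : Finset V).card ≤ 2 :=
    le_trans (Finset.card_insert_le _ _) (by simp)
  have := Finset.card_le_card hsub
  rw [Finset.card_univ] at this
  omega

lemma ncard_triple {V : Type*} {u v w : V} (huv : u ≠ v) (hwu : w ≠ u)
    (hwv : w ≠ v) : ({u, v, w} : Set V).ncard = 3 := by
  rw [Set.ncard_insert_of_notMem (by simp [huv, hwu.symm]),
    Set.ncard_insert_of_notMem (by simp [hwv.symm]), Set.ncard_singleton]

lemma deg_ge_of_trees {V : Type*} [Fintype V] {G : SimpleGraph V}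
    [DecidableRel G.Adj] {ℓ : ℕ} {S : Set V} (T : Fin ℓ → G.Subgraph)
    (h1 : ∀ i, G.IsSteinerTree S (T i))
    (h2 : ∀ i j, i ≠ j → Disjoint (T i).edgeSet (T j).edgeSet)
    {u a : V} (hu : u ∈ S) (ha : a ∈ S) (hua : u ≠ a) : ℓ ≤ G.degree u := by
  classical
  have hx : ∀ i : Fin ℓ, ∃ x, (T i).Adj u x := fun i =>
    tree_neighbor (h1 i).2 ((h1 i).1 hu) ((h1 i).1 ha) hua
  choose f hf using hx
  have hmem : ∀ i ∈ (Finset.univ : Finset (Fin ℓ)), f i ∈ G.neighborFinset u :=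
    fun i _ => by simpa using ((hf i).adj_sub)
  have hinj : Set.InjOn f (Finset.univ : Finset (Fin ℓ)) := by
    intro i _ j _ hij
    by_contra hne
    have e1 : s(u, f i) ∈ (T i).edgeSet := (hf i)
    have e2 : s(u, f i) ∈ (T j).edgeSet := by rw [hij]; exact (hf j)
    exact Set.disjoint_left.mp (h2 i j hne) e1 e2
  have h' := Finset.card_le_card_of_injOn f hmem hinj
  rw [Finset.card_univ, Fintype.card_fin] at h'
  exact h'

lemma unique_nbr {V : Type*} [Fintype V] {G : SimpleGraph V}
    [DecidableRel G.Adj] {ℓ : ℕ} {S : Set V} (T : Fin ℓ → G.Subgraph)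
    (h1 : ∀ i, G.IsSteinerTree S (T i))
    (h2 : ∀ i j, i ≠ j → Disjoint (T i).edgeSet (T j).edgeSet)
    {u a : V} (hu : u ∈ S) (ha : a ∈ S) (hua : u ≠ a)
    (hdeg : G.degree u = ℓ) :
    (∀ x, G.Adj u x → ∃ i, (T i).Adj u x) ∧
      ∀ i x y, (T i).Adj u x → (T i).Adj u y → x = y := by
  classical
  set N : Fin ℓ → Finset V :=
    fun i => (G.neighborFinset u).filter (fun x => (T i).Adj u x) with hN
  have hadjN : ∀ i x, x ∈ N i ↔ (T i).Adj u x := by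
    intro i x
    simp only [hN, Finset.mem_filter, SimpleGraph.mem_neighborFinset]
    exact ⟨fun h => h.2, fun h => ⟨h.adj_sub, h⟩⟩
  have hne : ∀ i, 1 ≤ (N i).card := by
    intro i
    obtain ⟨x, hx⟩ := tree_neighbor (h1 i).2 ((h1 i).1 hu) ((h1 i).1 ha) hua
    exact Finset.card_pos.mpr ⟨x, (hadjN i x).mpr hx⟩
  have hdisj : ∀ i ∈ (Finset.univ : Finset (Fin ℓ)),
      ∀ j ∈ (Finset.univ : Finset (Fin ℓ)), i ≠ j → Disjoint (N i) (N j) := by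
    intro i _ j _ hij
    rw [Finset.disjoint_left]
    intro x hxi hxj
    exact Set.disjoint_left.mp (h2 i j hij)
      (Subgraph.mem_edgeSet.mpr ((hadjN i x).mp hxi))
      (Subgraph.mem_edgeSet.mpr ((hadjN j x).mp hxj))
  have hsub : Finset.univ.biUnion N ⊆ G.neighborFinset u := by
    intro x hx
    obtain ⟨i, -, hi⟩ := Finset.mem_biUnion.mp hx
    exact SimpleGraph.mem_neighborFinset .. |>.mpr ((hadjN i x).mp hi).adj_sub
  have hcardU : (Finset.univ.biUnion N).card = ∑ i, (N i).card :=
    Finset.card_biUnion hdisj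
  have hle : ∑ i, (N i).card ≤ ℓ := by
    rw [← hcardU]
    calc (Finset.univ.biUnion N).card ≤ (G.neighborFinset u).card :=
          Finset.card_le_card hsub
      _ = ℓ := hdeg
  have hsum_ge : ℓ ≤ ∑ i, (N i).card := by
    calc ℓ = ∑ _i : Fin ℓ, 1 := by simp
      _ ≤ ∑ i, (N i).card := Finset.sum_le_sum (fun i _ => hne i)
  have hsum : ∑ i, (N i).card = ℓ := le_antisymm hle hsum_ge
  have hcard1 : ∀ i, (N i).card = 1 := by
    intro i
    by_contra hc
    have h2i : 2 ≤ (N i).card := by have := hne i; omega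
    have hlt : ∑ _j : Fin ℓ, 1 < ∑ j, (N j).card :=
      Finset.sum_lt_sum (fun j _ => hne j) ⟨i, Finset.mem_univ i, by omega⟩
    simp only [Finset.sum_const, Finset.card_univ, Fintype.card_fin, smul_eq_mul,
      mul_one] at hlt
    omega
  have hUeq : Finset.univ.biUnion N = G.neighborFinset u := by
    apply Finset.eq_of_subset_of_card_le hsub
    rw [hcardU, hsum]
    exact hdeg.le
  constructor
  · intro x hx
    have : x ∈ Finset.univ.biUnion N := by
      rw [hUeq]; exact (SimpleGraph.mem_neighborFinset ..).mpr hx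
    obtain ⟨i, -, hi⟩ := Finset.mem_biUnion.mp this
    exact ⟨i, (hadjN i x).mp hi⟩
  · intro i x y hx hy
    obtain ⟨z, hz⟩ := Finset.card_eq_one.mp (hcard1 i)
    have : x ∈ N i := (hadjN i x).mpr hx
    have : y ∈ N i := (hadjN i y).mpr hy
    aesop

lemma not_adj_both {V : Type*} [Fintype V] {G : SimpleGraph V}
    [DecidableRel G.Adj] {ℓ : ℕ} (h : G.genEdgeConn 3 = ℓ)
    (hcard : 3 ≤ Fintype.card V) {u v : V} (huv : G.Adj u v)
    (hdu : G.degree u = ℓ) (hdv : G.degree v = ℓ) : False := by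
  classical
  obtain ⟨w, hwu, hwv⟩ := exists_third hcard u v
  have hS : ({u, v, w} : Set V).ncard = 3 := ncard_triple huv.ne hwu hwv
  obtain ⟨T, h1, h2⟩ := extract_trees G ℓ _ (lambda_ge G ℓ h _ hS)
  have hu : u ∈ ({u, v, w} : Set V) := by simp
  have hv : v ∈ ({u, v, w} : Set V) := by simp
  have hw : w ∈ ({u, v, w} : Set V) := by simp
  obtain ⟨hall_u, huniq_u⟩ := unique_nbr T h1 h2 hu hw (Ne.symm hwu) hdu
  obtain ⟨-, huniq_v⟩ := unique_nbr T h1 h2 hv hw (Ne.symm hwv) hdv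
  obtain ⟨i, hi⟩ := hall_u v huv
  -- in tree i, the only neighbor of u is v and the only neighbor of v is u
  have huv' : u ∈ (T i).verts := (h1 i).1 hu
  have hvv' : v ∈ (T i).verts := (h1 i).1 hv
  have hwv' : w ∈ (T i).verts := (h1 i).1 hw
  have ha : ∀ x : (T i).verts, (T i).coe.Adj ⟨u, huv'⟩ x → x = ⟨v, hvv'⟩ := by
    intro x hx
    exact Subtype.ext (huniq_u i _ _ (Subgraph.coe_adj .. |>.mp hx) hi)
  have hb : ∀ x : (T i).verts, (T i).coe.Adj ⟨v, hvv'⟩ x → x = ⟨u, huv'⟩ := by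
    intro x hx
    exact Subtype.ext (huniq_v i _ _ (Subgraph.coe_adj .. |>.mp hx) hi.symm)
  obtain ⟨p⟩ := (h1 i).2.isConnected.preconnected ⟨u, huv'⟩ ⟨w, hwv'⟩
  rcases stuck_walk ha hb p (Or.inl rfl) with hq | hq
  · exact hwu (congrArg Subtype.val hq)
  · exact hwv (congrArg Subtype.val hq)

lemma mindeg {V : Type*} [Fintype V] {G : SimpleGraph V} [DecidableRel G.Adj]
    {ℓ : ℕ} (h : G.genEdgeConn 3 = ℓ) (hcard : 3 ≤ Fintype.card V) (v : V) :
    ℓ ≤ G.degree v := by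
  obtain ⟨a, hav, -⟩ := exists_third hcard v v
  obtain ⟨b, hbv, hba⟩ := exists_third hcard v a
  have hS : ({v, a, b} : Set V).ncard = 3 := ncard_triple (Ne.symm hav) hbv hba
  obtain ⟨T, h1, h2⟩ := extract_trees G ℓ _ (lambda_ge G ℓ h _ hS)
  exact deg_ge_of_trees T h1 h2 (by simp) (by simp : a ∈ ({v, a, b} : Set V))
    (Ne.symm hav)


theorem edge_lower_bound_of_lambda_three {V : Type*} [Fintype V]
    (G : SimpleGraph V) (n ℓ : ℕ) (hn : Fintype.card V = n) (h11 : 11 ≤ n)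
    (hl1 : 1 ≤ ℓ) (hl2 : ℓ ≤ n - 4) (h : G.genEdgeConn 3 = ℓ) :
    (ℓ * (ℓ + 1) * n + 2 * ℓ) / (2 * ℓ + 1) ≤ G.edgeSet.ncard := by
  classical
  have hcard : 3 ≤ Fintype.card V := by omega
  set m := G.edgeFinset.card with hm
  have hnc : G.edgeSet.ncard = m := by
    rw [hm, SimpleGraph.edgeFinset]
    exact Set.ncard_eq_toFinset_card' _
  rw [hnc]
  set D : Finset V := Finset.univ.filter (fun v => G.degree v = ℓ) with hD
  set d := D.card with hd
  -- claim 1 : ℓ * d ≤ m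
  have hdisj : ∀ u ∈ D, ∀ v ∈ D, u ≠ v →
      Disjoint (G.incidenceFinset u) (G.incidenceFinset v) := by
    intro u hu v hv huv
    have hna : ¬ G.Adj u v := fun hadj => not_adj_both h hcard hadj
      (by simpa [hD] using hu) (by simpa [hD] using hv)
    rw [Finset.disjoint_left]
    intro e heu hev
    exact hna (G.adj_of_mem_incidenceSet huv
      ((G.mem_incidenceFinset u e).mp heu) ((G.mem_incidenceFinset v e).mp hev))
  have hsub : D.biUnion (fun v => G.incidenceFinset v) ⊆ G.edgeFinset := by
    intro e he
    obtain ⟨v, -, hv⟩ := Finset.mem_biUnion.mp he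
    rw [SimpleGraph.mem_edgeFinset]
    exact G.incidenceSet_subset v ((G.mem_incidenceFinset v e).mp hv)
  have hclaim1 : ℓ * d ≤ m := by
    have hcb := Finset.card_biUnion hdisj
    have : ∑ v ∈ D, (G.incidenceFinset v).card = ℓ * d := by
      rw [Finset.sum_congr rfl (fun v hv => ?_), Finset.sum_const, smul_eq_mul,
        mul_comm]
      rw [G.card_incidenceFinset_eq_degree v]
      simpa [hD] using hv
    rw [this] at hcb
    rw [hm, ← hcb]
    exact Finset.card_le_card hsub
  -- claim 2 : (ℓ+1) * (n - d) + ℓ * d ≤ 2 * m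
  have hdn : d ≤ n := by rw [hd, ← hn]; exact Finset.card_le_univ D
  have hclaim2 : (ℓ + 1) * (n - d) + ℓ * d ≤ 2 * m := by
    have hsum := G.sum_degrees_eq_twice_card_edges
    have hsplit := Finset.sum_add_sum_compl D (fun v => G.degree v)
    have hDdeg : ∑ v ∈ D, G.degree v = ℓ * d := by
      rw [Finset.sum_congr rfl (fun v hv => (by simpa [hD] using hv : G.degree v = ℓ)),
        Finset.sum_const, smul_eq_mul, mul_comm]
    have hDc : (ℓ + 1) * (n - d) ≤ ∑ v ∈ Dᶜ, G.degree v := by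
      have hcc : Dᶜ.card = n - d := by
        rw [Finset.card_compl, hn, hd]
      calc (ℓ + 1) * (n - d) = ∑ _v ∈ Dᶜ, (ℓ + 1) := by
            rw [Finset.sum_const, smul_eq_mul, hcc, mul_comm]
        _ ≤ ∑ v ∈ Dᶜ, G.degree v := by
            apply Finset.sum_le_sum
            intro v hv
            have h1 := mindeg h hcard v
            have h2 : G.degree v ≠ ℓ := by
              intro he
              exact (Finset.mem_compl.mp hv) (by simp [hD, he])
            omega
    omega
  -- arithmetic finish
  have hkey : ℓ * (ℓ + 1) * n ≤ (2 * ℓ + 1) * m := by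
    have hc2 : (ℓ + 1) * n ≤ 2 * m + d := by
      have : (ℓ + 1) * (n - d) + (ℓ + 1) * d = (ℓ + 1) * n := by
        rw [← Nat.mul_add, Nat.sub_add_cancel hdn]
      nlinarith
    nlinarith [mul_le_mul_right hc2 ℓ, mul_le_mul_right hclaim1 1]
  rw [Nat.div_le_iff_le_mul_add_pred (by omega)]
  have e1 : 2 * ℓ + 1 - 1 = 2 * ℓ := by omega
  rw [e1]
  exact add_le_add hkey le_rfl
end
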